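/- Given d² unit vectors |φ_s⟩ in ℂ^d with |⟨φ_s|φ_t⟩|² = (dδ_{st}+1)/(d+1), one has Σ_s |φ_s⟩⟨φ_s| = d·𝟙 and Σ_{s,t} β_{st} |φ_s⟩⟨φ_s|^T ⊗ |φ_t⟩⟨φ_t|^T = F/d, where β_{st} = (d(d+1)δ_{st} − 1)/d³ and F is the swap operator. -/

import Mathlib

open Matrix Kronecker

noncomputable section

/-- The flip (swap) operator `F = Σ_{i,j} |ij⟩⟨ji|` on `ℂ^d ⊗ ℂ^d`. -/
def swapF (d : ℕ) : Matrix (Fin d × Fin d) (Fin d × Fin d) ℂ :=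
  Matrix.of fun p q => if p.1 = q.2 ∧ p.2 = q.1 then 1 else 0

namespace SicAux

open Finset

variable {n m : Type*} [Fintype n] [Fintype m]

/-- Frobenius inner product. -/
def ip (A B : Matrix n n ℂ) : ℂ := ∑ i, ∑ j, star (A i j) * B i j

lemma ip_self_eq (A : Matrix n n ℂ) :
    ip A A = ((∑ i, ∑ j, Complex.normSq (A i j) : ℝ) : ℂ) := by
  unfold ip
  push_cast
  refine Finset.sum_congr rfl fun i _ => Finset.sum_congr rfl fun j _ => ?_
  rw [Complex.star_def, Complex.normSq_eq_conj_mul_self]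

lemma eq_of_ip_sub_self (A B : Matrix n n ℂ) (h : ip (A - B) (A - B) = 0) : A = B := by
  rw [ip_self_eq] at h
  have h' : (∑ i, ∑ j, Complex.normSq ((A - B) i j) : ℝ) = 0 := by exact_mod_cast h
  have hz : ∀ i ∈ (univ : Finset n), (∑ j, Complex.normSq ((A - B) i j)) = 0 := by
    refine (Finset.sum_eq_zero_iff_of_nonneg fun i _ => ?_).mp h'
    exact Finset.sum_nonneg fun j _ => Complex.normSq_nonneg _
  ext i j
  have hz2 : Complex.normSq ((A - B) i j) = 0 := by
    have := (Finset.sum_eq_zero_iff_of_nonneg fun j _ => Complex.normSq_nonneg ((A-B) i j)).mp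
      (hz i (mem_univ i)) j (mem_univ j)
    exact this
  have := Complex.normSq_eq_zero.mp hz2
  simpa [sub_eq_zero] using this

lemma ip_sub_sub (A B C D : Matrix n n ℂ) :
    ip (A - B) (C - D) = ip A C - ip A D - ip B C + ip B D := by
  unfold ip
  simp only [Matrix.sub_apply, star_sub, sub_mul, mul_sub, Finset.sum_sub_distrib]
  ring

lemma ip_sum_left {ι : Type*} (s : Finset ι) (f : ι → Matrix n n ℂ) (B : Matrix n n ℂ) :
    ip (∑ x ∈ s, f x) B = ∑ x ∈ s, ip (f x) B := by
  unfold ip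
  simp only [Matrix.sum_apply, star_sum, Finset.sum_mul]
  trans ∑ i, ∑ x ∈ s, ∑ j, star (f x i j) * B i j
  · exact Finset.sum_congr rfl fun i _ => Finset.sum_comm
  · exact Finset.sum_comm

lemma ip_sum_right {ι : Type*} (s : Finset ι) (f : ι → Matrix n n ℂ) (B : Matrix n n ℂ) :
    ip B (∑ x ∈ s, f x) = ∑ x ∈ s, ip B (f x) := by
  unfold ip
  simp only [Matrix.sum_apply, Finset.mul_sum]
  trans ∑ i, ∑ x ∈ s, ∑ j, star (B i j) * f x i j
  · exact Finset.sum_congr rfl fun i _ => Finset.sum_comm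
  · exact Finset.sum_comm

lemma ip_smul_left (c : ℂ) (A B : Matrix n n ℂ) : ip (c • A) B = star c * ip A B := by
  unfold ip
  simp only [Matrix.smul_apply, smul_eq_mul, star_mul', Finset.mul_sum]
  ring_nf

lemma ip_smul_right (c : ℂ) (A B : Matrix n n ℂ) : ip A (c • B) = c * ip A B := by
  unfold ip
  simp only [Matrix.smul_apply, smul_eq_mul, Finset.mul_sum]
  refine Finset.sum_congr rfl fun i _ => Finset.sum_congr rfl fun j _ => by ring


lemma ip_transpose (A B : Matrix n n ℂ) : ip Aᵀ Bᵀ = ip A B := by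
  unfold ip
  rw [Finset.sum_comm]
  rfl

lemma ip_kron (A C : Matrix m m ℂ) (B D : Matrix n n ℂ) :
    ip (A ⊗ₖ B) (C ⊗ₖ D) = ip A C * ip B D := by
  unfold ip
  calc ∑ i : m × n, ∑ j : m × n,
        star ((A ⊗ₖ B) i j) * ((C ⊗ₖ D) i j)
      = ∑ i1 : m, ∑ i2 : n, ∑ j1 : m, ∑ j2 : n,
          (star (A i1 j1) * C i1 j1) * (star (B i2 j2) * D i2 j2) := by
        rw [Fintype.sum_prod_type]
        refine Finset.sum_congr rfl fun i1 _ => Finset.sum_congr rfl fun i2 _ => ?_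
        rw [Fintype.sum_prod_type]
        refine Finset.sum_congr rfl fun j1 _ => Finset.sum_congr rfl fun j2 _ => ?_
        simp only [kroneckerMap_apply, star_mul']
        ring
    _ = ∑ i1 : m, ∑ j1 : m,
          (star (A i1 j1) * C i1 j1) * (∑ i2 : n, ∑ j2 : n, star (B i2 j2) * D i2 j2) := by
        refine Finset.sum_congr rfl fun i1 _ => ?_
        rw [Finset.sum_comm]
        refine Finset.sum_congr rfl fun j1 _ => ?_
        rw [Finset.mul_sum]
        refine Finset.sum_congr rfl fun i2 _ => ?_
        rw [Finset.mul_sum]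
    _ = (∑ i1 : m, ∑ j1 : m, star (A i1 j1) * C i1 j1)
          * (∑ i2 : n, ∑ j2 : n, star (B i2 j2) * D i2 j2) := by
        rw [Finset.sum_mul]
        refine Finset.sum_congr rfl fun i1 _ => ?_
        rw [Finset.sum_mul]


def gC (d : ℕ) (s t : Fin (d^2)) : ℂ := ((if s = t then (d:ℂ) else 0) + 1) / ((d:ℂ) + 1)
def bC (d : ℕ) (s t : Fin (d^2)) : ℂ :=
  ((d:ℂ) * ((d:ℂ) + 1) * (if s = t then 1 else 0) - 1) / (d:ℂ)^3

variable {d : ℕ}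

lemma dC_ne (hd : 0 < d) : (d:ℂ) ≠ 0 := Nat.cast_ne_zero.mpr hd.ne'

lemma dC1_ne : ((d:ℂ) + 1) ≠ 0 := by
  have : ((d+1 : ℕ) : ℂ) ≠ 0 := Nat.cast_ne_zero.mpr (Nat.succ_ne_zero d)
  push_cast at this; exact this

lemma D0_ne (hd : 0 < d) : ((d:ℂ)^3 * ((d:ℂ) + 1)) ≠ 0 :=
  mul_ne_zero (pow_ne_zero 3 (dC_ne hd)) dC1_ne

lemma gC_symm (s t : Fin (d^2)) : gC d s t = gC d t s := by
  unfold gC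
  by_cases h : s = t
  · rw [if_pos h, if_pos h.symm]
  · rw [if_neg h, if_neg (Ne.symm h)]

lemma bC_symm (s t : Fin (d^2)) : bC d s t = bC d t s := by
  unfold bC
  by_cases h : s = t
  · rw [if_pos h, if_pos h.symm]
  · rw [if_neg h, if_neg (Ne.symm h)]

lemma lemA (hd : 0 < d) (s v : Fin (d^2)) :
    ∑ u, gC d s u * bC d u v = (d:ℂ)⁻¹ * (if s = v then 1 else 0) := by
  have h0 := dC_ne hd
  have h1 : ((d:ℂ) + 1) ≠ 0 := dC1_ne
  have hD0 := D0_ne hd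
  have hterm : ∀ u, gC d s u * bC d u v =
      ((if s = u then -(d:ℂ) else 0)
        + (if u = v then (d:ℂ)*((d:ℂ)+1) else 0)
        + (if s = u then (if s = v then (d:ℂ)^2*((d:ℂ)+1) else 0) else 0)
        + -1) / ((d:ℂ)^3 * ((d:ℂ)+1)) := by
    intro u
    unfold gC bC
    rw [div_mul_div_comm, div_eq_div_iff (mul_ne_zero h1 (pow_ne_zero 3 h0)) hD0]
    rcases eq_or_ne s u with h2 | h2
    · subst h2
      rcases eq_or_ne s v with h3 | h3
      · subst h3; simp; ring
      · simp [h3]; ring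
    · rcases eq_or_ne u v with h3 | h3
      · subst h3
        have h3' : s ≠ u := h2
        simp [h2, h3']; ring
      · simp [h2, h3]; ring
  rw [Finset.sum_congr rfl fun u _ => hterm u, ← Finset.sum_div]
  simp only [Finset.sum_add_distrib, Finset.sum_ite_eq, Finset.sum_ite_eq', Finset.mem_univ,
    if_true, Finset.sum_const, Finset.card_univ, Fintype.card_fin, nsmul_eq_mul]
  rw [div_eq_iff hD0]
  rcases eq_or_ne s v with h | h
  · rw [if_pos h, if_pos h, mul_one]
    push_cast
    field_simp
    ring
  · rw [if_neg h, if_neg h, mul_zero, zero_mul]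
    push_cast
    ring

lemma lemB (hd : 0 < d) : ∑ s, ∑ t, bC d s t * gC d s t = (d : ℂ) := by
  have hinn : ∀ s : Fin (d^2), ∑ t, bC d s t * gC d s t = (d:ℂ)⁻¹ := by
    intro s
    have h := lemA hd s s
    rw [if_pos rfl, mul_one] at h
    rw [← h]
    exact Finset.sum_congr rfl fun t _ => by rw [bC_symm, mul_comm, gC_symm]
  rw [Finset.sum_congr rfl fun s _ => hinn s]
  simp only [Finset.sum_const, Finset.card_univ, Fintype.card_fin, nsmul_eq_mul]
  push_cast
  rw [pow_two, mul_assoc, mul_inv_cancel₀ (dC_ne hd), mul_one]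

lemma lemT1 (hd : 0 < d) :
    ∑ s, ∑ t, ∑ u, ∑ v, (bC d s t * bC d u v) * (gC d s u * gC d t v) = 1 := by
  have inner : ∀ s t : Fin (d^2),
      ∑ u, ∑ v, bC d u v * (gC d s u * gC d t v) = (d:ℂ)⁻¹ * gC d t s := by
    intro s t
    have step1 : ∑ u, ∑ v, bC d u v * (gC d s u * gC d t v)
        = ∑ v, (∑ u, gC d s u * bC d u v) * gC d t v := by
      rw [Finset.sum_comm]
      refine Finset.sum_congr rfl fun v _ => ?_
      rw [Finset.sum_mul]
      exact Finset.sum_congr rfl fun u _ => by ring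
    rw [step1, Finset.sum_congr rfl fun v _ => by rw [lemA hd s v]]
    simp only [mul_ite, mul_one, mul_zero, ite_mul, zero_mul]
    rw [Finset.sum_ite_eq]
    simp
  have main : ∀ s t : Fin (d^2),
      ∑ u, ∑ v, (bC d s t * bC d u v) * (gC d s u * gC d t v)
        = bC d s t * ((d:ℂ)⁻¹ * gC d t s) := by
    intro s t
    rw [← inner s t, Finset.mul_sum]
    refine Finset.sum_congr rfl fun u _ => ?_
    rw [Finset.mul_sum]
    exact Finset.sum_congr rfl fun v _ => by ring
  rw [Finset.sum_congr rfl fun s _ => Finset.sum_congr rfl fun t _ => main s t]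
  have hsplit : ∑ s, ∑ t, bC d s t * ((d:ℂ)⁻¹ * gC d t s)
      = (d:ℂ)⁻¹ * ∑ s, ∑ t, bC d s t * gC d s t := by
    rw [Finset.mul_sum]
    refine Finset.sum_congr rfl fun s _ => ?_
    rw [Finset.mul_sum]
    exact Finset.sum_congr rfl fun t _ => by rw [gC_symm t s]; ring
  rw [hsplit, lemB hd]
  exact inv_mul_cancel₀ (dC_ne hd)

lemma sum_gC (hd : 0 < d) : ∑ s : Fin (d^2), ∑ t, gC d s t = (d:ℂ)^3 := by
  have : ∀ s : Fin (d^2), ∑ t, gC d s t = (d:ℂ) := by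
    intro s
    unfold gC
    rw [← Finset.sum_div]
    simp only [Finset.sum_add_distrib, Finset.sum_ite_eq, Finset.mem_univ, if_true,
      Finset.sum_const, Finset.card_univ, Fintype.card_fin, nsmul_eq_mul, mul_one]
    rw [div_eq_iff dC1_ne]
    push_cast
    ring
  rw [Finset.sum_congr rfl fun s _ => this s]
  simp only [Finset.sum_const, Finset.card_univ, Fintype.card_fin, nsmul_eq_mul]
  push_cast
  ring


variable {d : ℕ} (φ : Fin (d^2) → Fin d → ℂ)

def P (s : Fin (d^2)) : Matrix (Fin d) (Fin d) ℂ := vecMulVec (φ s) (star (φ s))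

def z (s t : Fin (d^2)) : ℂ := ∑ i, star (φ s i) * φ t i

lemma ip_P (s t : Fin (d^2)) : ip (P φ s) (P φ t) = z φ s t * star (z φ s t) := by
  unfold ip P z
  rw [star_sum, Finset.sum_mul_sum]
  refine Finset.sum_congr rfl fun i _ => Finset.sum_congr rfl fun j _ => ?_
  simp only [vecMulVec_apply, Pi.star_apply, star_mul', star_star]
  ring

lemma ip_P_one (hunit : ∀ s, ∑ i, star (φ s i) * φ s i = 1) (s : Fin (d^2)) :
    ip (P φ s) (1 : Matrix (Fin d) (Fin d) ℂ) = 1 := by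
  unfold ip P
  simp only [Matrix.one_apply, mul_ite, mul_one, mul_zero, Finset.sum_ite_eq, Finset.mem_univ,
    if_true, vecMulVec_apply, Pi.star_apply, star_mul', star_star]
  exact hunit s

lemma ip_one_P (hunit : ∀ s, ∑ i, star (φ s i) * φ s i = 1) (s : Fin (d^2)) :
    ip (1 : Matrix (Fin d) (Fin d) ℂ) (P φ s) = 1 := by
  unfold ip P
  simp only [Matrix.one_apply, apply_ite (star : ℂ → ℂ), star_one, star_zero, ite_mul, one_mul,
    zero_mul, Finset.sum_ite_eq, Finset.mem_univ, if_true, vecMulVec_apply, Pi.star_apply]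
  rw [← hunit s]
  exact Finset.sum_congr rfl fun i _ => by ring

lemma ip_one_one : ip (1 : Matrix (Fin d) (Fin d) ℂ) 1 = (d : ℂ) := by
  unfold ip
  simp [Matrix.one_apply, apply_ite (star : ℂ → ℂ), ite_mul, Finset.sum_ite_eq]

lemma ip_Kt_swap (s t : Fin (d^2)) :
    ip ((P φ s)ᵀ ⊗ₖ (P φ t)ᵀ) (swapF d) = z φ s t * star (z φ s t) := by
  unfold ip
  have hswap : ∀ i : Fin d × Fin d,
      ∑ j : Fin d × Fin d, star (((P φ s)ᵀ ⊗ₖ (P φ t)ᵀ) i j) * swapF d i j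
        = star (((P φ s)ᵀ ⊗ₖ (P φ t)ᵀ) i (i.2, i.1)) := by
    intro i
    rw [Fintype.sum_prod_type]
    simp only [swapF, Matrix.of_apply, mul_ite, mul_one, mul_zero, ite_and,
      Finset.sum_ite_irrel, Finset.sum_const_zero, Finset.sum_ite_eq, Finset.mem_univ, if_true]
  rw [Finset.sum_congr rfl fun i _ => hswap i]
  rw [Fintype.sum_prod_type, Finset.sum_comm]
  unfold P z
  rw [star_sum, Finset.sum_mul_sum]
  refine Finset.sum_congr rfl fun i _ => Finset.sum_congr rfl fun j _ => ?_
  simp only [kroneckerMap_apply, transpose_apply, vecMulVec_apply, Pi.star_apply, star_mul',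
    star_star]
  ring

lemma ip_swap_Kt (s t : Fin (d^2)) :
    ip (swapF d) ((P φ s)ᵀ ⊗ₖ (P φ t)ᵀ) = z φ s t * star (z φ s t) := by
  unfold ip
  have hswap : ∀ i : Fin d × Fin d,
      ∑ j : Fin d × Fin d, star (swapF d i j) * (((P φ s)ᵀ ⊗ₖ (P φ t)ᵀ) i j)
        = ((P φ s)ᵀ ⊗ₖ (P φ t)ᵀ) i (i.2, i.1) := by
    intro i
    rw [Fintype.sum_prod_type]
    simp only [swapF, Matrix.of_apply, apply_ite (star : ℂ → ℂ), star_one, star_zero, ite_mul,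
      one_mul, zero_mul, ite_and, Finset.sum_ite_irrel, Finset.sum_const_zero,
      Finset.sum_ite_eq, Finset.mem_univ, if_true]
  rw [Finset.sum_congr rfl fun i _ => hswap i]
  rw [Fintype.sum_prod_type]
  unfold P z
  rw [star_sum, Finset.sum_mul_sum]
  refine Finset.sum_congr rfl fun i _ => Finset.sum_congr rfl fun j _ => ?_
  simp only [kroneckerMap_apply, transpose_apply, vecMulVec_apply, Pi.star_apply, star_mul',
    star_star]
  ring

lemma ip_swap_swap : ip (swapF d) (swapF d) = ((d:ℂ))^2 := by
  unfold ip
  have hswap : ∀ i : Fin d × Fin d,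
      ∑ j : Fin d × Fin d, star (swapF d i j) * swapF d i j = 1 := by
    intro i
    rw [Fintype.sum_prod_type]
    simp only [swapF, Matrix.of_apply, apply_ite (star : ℂ → ℂ), star_one, star_zero, ite_mul,
      one_mul, zero_mul, mul_ite, mul_one, mul_zero, ite_and, Finset.sum_ite_irrel,
      Finset.sum_const_zero, Finset.sum_ite_eq, Finset.mem_univ, if_true]
  rw [Finset.sum_congr rfl fun i _ => hswap i]
  simp only [Finset.sum_const, Finset.card_univ, Fintype.card_prod, Fintype.card_fin,
    nsmul_eq_mul, mul_one]
  push_cast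
  ring


end SicAux

open SicAux Finset in
theorem sic_resolutions (d : ℕ) (hd : 0 < d)
    (φ : Fin (d^2) → Fin d → ℂ)
    (hunit : ∀ s, ∑ i, star (φ s i) * φ s i = 1)
    (hsic : ∀ s t, Complex.normSq (∑ i, star (φ s i) * φ t i)
      = ((if s = t then (d : ℝ) else 0) + 1) / ((d : ℝ) + 1)) :
    (∑ s, vecMulVec (φ s) (star (φ s))) = (d : ℂ) • 1 ∧
    ∑ s, ∑ t,
      ((((d : ℝ) * ((d : ℝ) + 1) * (if s = t then 1 else 0) - 1) / (d : ℝ)^3 : ℝ) : ℂ) •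
        ((vecMulVec (φ s) (star (φ s)))ᵀ ⊗ₖ (vecMulVec (φ t) (star (φ t)))ᵀ)
      = ((d : ℂ))⁻¹ • swapF d := by
  have hzg : ∀ s t, z φ s t * star (z φ s t) = gC d s t := by
    intro s t
    rw [show star (z φ s t) = (starRingEnd ℂ) (z φ s t) from rfl, Complex.mul_conj]
    unfold z gC
    rw [hsic s t]
    push_cast [apply_ite (Complex.ofReal ·)]
    rfl
  have hb : ∀ s t : Fin (d^2),
      ((((d : ℝ) * ((d : ℝ) + 1) * (if s = t then 1 else 0) - 1) / (d : ℝ)^3 : ℝ) : ℂ)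
        = bC d s t := by
    intro s t
    unfold bC
    push_cast [apply_ite (Complex.ofReal ·)]
    rfl
  have hstb : ∀ s t : Fin (d^2), star (bC d s t) = bC d s t := by
    intro s t
    rw [← hb s t, Complex.star_def, Complex.conj_ofReal]
  constructor
  · -- Part 1
    apply eq_of_ip_sub_self
    have e1 : ip (∑ s, vecMulVec (φ s) (star (φ s))) (∑ s, vecMulVec (φ s) (star (φ s)))
        = (d:ℂ)^3 := by
      show ip (∑ s, P φ s) (∑ s, P φ s) = _
      rw [ip_sum_left]
      rw [Finset.sum_congr rfl fun s _ => ip_sum_right univ (P φ) (P φ s)]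
      rw [Finset.sum_congr rfl fun s _ => Finset.sum_congr rfl fun t _ =>
        (ip_P φ s t).trans (hzg s t)]
      exact sum_gC hd
    have e2 : ip (∑ s, vecMulVec (φ s) (star (φ s))) ((d : ℂ) • 1) = (d:ℂ)^3 := by
      show ip (∑ s, P φ s) ((d : ℂ) • 1) = _
      rw [ip_sum_left]
      rw [Finset.sum_congr rfl fun s _ => by
        rw [ip_smul_right, ip_P_one φ hunit s, mul_one]]
      simp only [Finset.sum_const, Finset.card_univ, Fintype.card_fin, nsmul_eq_mul]
      push_cast
      ring
    have e3 : ip ((d : ℂ) • 1) (∑ s, vecMulVec (φ s) (star (φ s))) = (d:ℂ)^3 := by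
      show ip ((d : ℂ) • 1) (∑ s, P φ s) = _
      rw [ip_sum_right]
      rw [Finset.sum_congr rfl fun s _ => by
        rw [ip_smul_left, ip_one_P φ hunit s, mul_one, star_natCast]]
      simp only [Finset.sum_const, Finset.card_univ, Fintype.card_fin, nsmul_eq_mul]
      push_cast
      ring
    have e4 : ip ((d:ℂ) • (1 : Matrix (Fin d) (Fin d) ℂ)) ((d:ℂ) • 1) = (d:ℂ)^3 := by
      rw [ip_smul_left, ip_smul_right, ip_one_one, star_natCast]
      ring
    rw [ip_sub_sub, e1, e2, e3, e4]
    ring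
  · -- Part 2
    rw [Finset.sum_congr rfl fun s _ => Finset.sum_congr rfl fun t _ => by rw [hb s t]]
    apply eq_of_ip_sub_self
    set X : Matrix (Fin d × Fin d) (Fin d × Fin d) ℂ :=
      ∑ s, ∑ t, bC d s t • ((vecMulVec (φ s) (star (φ s)))ᵀ ⊗ₖ (vecMulVec (φ t) (star (φ t)))ᵀ)
      with hX
    have hipK : ∀ s t u v : Fin (d^2),
        ip ((vecMulVec (φ s) (star (φ s)))ᵀ ⊗ₖ (vecMulVec (φ t) (star (φ t)))ᵀ)
           ((vecMulVec (φ u) (star (φ u)))ᵀ ⊗ₖ (vecMulVec (φ v) (star (φ v)))ᵀ)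
          = gC d s u * gC d t v := by
      intro s t u v
      show ip ((P φ s)ᵀ ⊗ₖ (P φ t)ᵀ) ((P φ u)ᵀ ⊗ₖ (P φ v)ᵀ) = _
      rw [ip_kron, ip_transpose, ip_transpose, ip_P, ip_P, hzg, hzg]
    have hXX : ip X X = 1 := by
      rw [hX, ip_sum_left]
      rw [Finset.sum_congr rfl fun s _ => ip_sum_left univ _ _]
      rw [Finset.sum_congr rfl fun s _ => Finset.sum_congr rfl fun t _ => by
        rw [ip_smul_left, ip_sum_right]]
      rw [Finset.sum_congr rfl fun s _ => Finset.sum_congr rfl fun t _ => by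
        rw [Finset.mul_sum,
          Finset.sum_congr rfl fun u (_ : u ∈ univ) => by
            rw [ip_sum_right, Finset.mul_sum,
              Finset.sum_congr rfl fun v (_ : v ∈ univ) => by
                rw [ip_smul_right, hipK s t u v, hstb s t]]]]
      rw [← lemT1 hd]
      exact Finset.sum_congr rfl fun s _ => Finset.sum_congr rfl fun t _ =>
        Finset.sum_congr rfl fun u _ => Finset.sum_congr rfl fun v _ => by ring
    have hipKF : ∀ s t : Fin (d^2),
        ip ((vecMulVec (φ s) (star (φ s)))ᵀ ⊗ₖ (vecMulVec (φ t) (star (φ t)))ᵀ) (swapF d)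
          = gC d s t := fun s t => (ip_Kt_swap φ s t).trans (hzg s t)
    have hipFK : ∀ s t : Fin (d^2),
        ip (swapF d) ((vecMulVec (φ s) (star (φ s)))ᵀ ⊗ₖ (vecMulVec (φ t) (star (φ t)))ᵀ)
          = gC d s t := fun s t => (ip_swap_Kt φ s t).trans (hzg s t)
    have hXY : ip X ((d:ℂ)⁻¹ • swapF d) = 1 := by
      rw [hX, ip_sum_left]
      rw [Finset.sum_congr rfl fun s _ => ip_sum_left univ _ _]
      rw [Finset.sum_congr rfl fun s _ => Finset.sum_congr rfl fun t _ => by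
        rw [ip_smul_left, ip_smul_right, hipKF s t, hstb s t]]
      have : ∑ s, ∑ t, bC d s t * ((d:ℂ)⁻¹ * gC d s t)
          = (d:ℂ)⁻¹ * ∑ s, ∑ t, bC d s t * gC d s t := by
        rw [Finset.mul_sum]
        refine Finset.sum_congr rfl fun s _ => ?_
        rw [Finset.mul_sum]
        exact Finset.sum_congr rfl fun t _ => by ring
      rw [this, lemB hd, inv_mul_cancel₀ (dC_ne hd)]
    have hYX : ip ((d:ℂ)⁻¹ • swapF d) X = 1 := by
      rw [hX, ip_sum_right]
      rw [Finset.sum_congr rfl fun s _ => ip_sum_right univ _ _]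
      rw [Finset.sum_congr rfl fun s _ => Finset.sum_congr rfl fun t _ => by
        rw [ip_smul_left, ip_smul_right, hipFK s t]]
      have : ∑ s, ∑ t, star ((d:ℂ)⁻¹) * (bC d s t * gC d s t)
          = star ((d:ℂ)⁻¹) * ∑ s, ∑ t, bC d s t * gC d s t := by
        rw [Finset.mul_sum]
        exact Finset.sum_congr rfl fun s _ => by rw [Finset.mul_sum]
      rw [this, lemB hd]
      rw [star_inv₀, star_natCast, inv_mul_cancel₀ (dC_ne hd)]
    have hYY : ip ((d:ℂ)⁻¹ • swapF d) ((d:ℂ)⁻¹ • swapF d) = 1 := by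
      rw [ip_smul_left, ip_smul_right, ip_swap_swap, star_inv₀, star_natCast]
      field_simp
      rw [div_self (dC_ne hd)]
    rw [ip_sub_sub, hXX, hXY, hYX, hYY]
    ring
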